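/- Under independence (uniformly random independent rank permutations), Var(\bar{C}_n(u,v)) = (n-1)^{-1} {u(1-u) - eps_n(u)}{v(1-v) - eps_n(v)}, where eps_n(t) = n^{-1} (nt - floor(nt))(1 - (nt - floor(nt))). -/

import Mathlib

/-- The multilinear rank representation of the interpolated empirical copula `C̄ₙ`. -/
noncomputable def barRep (n : ℕ) (R S : Equiv.Perm (Fin n)) (u v : ℝ) : ℝ :=
  (1 / n : ℝ) * ∑ i : Fin n,
    ((if (R i : ℕ) + 1 ≤ ⌊(n : ℝ) * u⌋₊ then (1:ℝ) else 0)
      + ((n : ℝ) * u - (⌊(n : ℝ) * u⌋₊ : ℝ)) *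
        (if (R i : ℕ) + 1 = ⌊(n : ℝ) * u⌋₊ + 1 then 1 else 0)) *
    ((if (S i : ℕ) + 1 ≤ ⌊(n : ℝ) * v⌋₊ then (1:ℝ) else 0)
      + ((n : ℝ) * v - (⌊(n : ℝ) * v⌋₊ : ℝ)) *
        (if (S i : ℕ) + 1 = ⌊(n : ℝ) * v⌋₊ + 1 then 1 else 0))

/-- `εₙ(t) = n⁻¹(nt − ⌊nt⌋)(1 − (nt − ⌊nt⌋))`. -/
noncomputable def epsn (n : ℕ) (t : ℝ) : ℝ :=
  ((n : ℝ) * t - (⌊(n : ℝ) * t⌋₊ : ℝ)) * (1 - ((n : ℝ) * t - (⌊(n : ℝ) * t⌋₊ : ℝ))) / n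

/-! ### Auxiliary definitions and lemmas -/

/-- The score function: `sc n t r = 1[r+1 ≤ ⌊nt⌋] + (nt - ⌊nt⌋)·1[r+1 = ⌊nt⌋+1]`. -/
noncomputable def sc (n : ℕ) (t : ℝ) (r : Fin n) : ℝ :=
  (if (r : ℕ) + 1 ≤ ⌊(n : ℝ) * t⌋₊ then (1:ℝ) else 0)
    + ((n : ℝ) * t - (⌊(n : ℝ) * t⌋₊ : ℝ)) *
      (if (r : ℕ) + 1 = ⌊(n : ℝ) * t⌋₊ + 1 then 1 else 0)

lemma sc_aux (n m : ℕ) (hm : m ≤ n) (c : ℝ) :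
    ∑ r : Fin n, ((if (r:ℕ) + 1 ≤ m then (1:ℝ) else 0)
        + c * (if (r:ℕ) + 1 = m + 1 then 1 else 0))
      = m + c * (if m < n then 1 else 0) := by
  rw [Finset.sum_add_distrib, ← Finset.mul_sum]
  congr 1
  · rw [Fin.sum_univ_eq_sum_range (fun k => if k + 1 ≤ m then (1:ℝ) else 0)]
    rw [Finset.sum_boole]
    have : (Finset.range n).filter (fun k => k + 1 ≤ m) = Finset.range m := by
      ext k; simp; omega
    rw [this, Finset.card_range]
  · rw [Fin.sum_univ_eq_sum_range (fun k => if k + 1 = m + 1 then (1:ℝ) else 0)]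
    have : ∀ k ∈ Finset.range n, (if k + 1 = m + 1 then (1:ℝ) else 0)
        = if k = m then (1:ℝ) else 0 := by intro k _; simp
    rw [Finset.sum_congr rfl this, Finset.sum_ite_eq' (Finset.range n) m (fun _ => (1:ℝ))]
    simp [Finset.mem_range]

lemma floor_le_n (n : ℕ) (t : ℝ) (hn : 1 ≤ n) (ht : t ∈ Set.Icc (0:ℝ) 1) :
    ⌊(n : ℝ) * t⌋₊ ≤ n := by
  have : (n:ℝ) * t ≤ n := by
    nlinarith [ht.1, ht.2, (Nat.one_le_cast (α := ℝ)).mpr hn]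
  calc ⌊(n : ℝ) * t⌋₊ ≤ ⌊(n : ℝ)⌋₊ := Nat.floor_le_floor this
    _ = n := Nat.floor_natCast n

lemma frac_cases (n : ℕ) (t : ℝ) (hn : 1 ≤ n) (ht : t ∈ Set.Icc (0:ℝ) 1) :
    (⌊(n : ℝ) * t⌋₊ < n) ∨ (⌊(n : ℝ) * t⌋₊ = n ∧ (n:ℝ) * t - (⌊(n : ℝ) * t⌋₊ : ℝ) = 0) := by
  rcases lt_or_eq_of_le (floor_le_n n t hn ht) with h | h
  · exact Or.inl h
  · refine Or.inr ⟨h, ?_⟩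
    have h1 : (n:ℝ) * t ≤ n := by
      nlinarith [ht.1, ht.2, (Nat.one_le_cast (α := ℝ)).mpr hn]
    have h2 : (⌊(n : ℝ) * t⌋₊ : ℝ) ≤ (n:ℝ) * t :=
      Nat.floor_le (mul_nonneg (Nat.cast_nonneg n) ht.1)
    rw [h] at h2 ⊢
    linarith

lemma sc_sum (n : ℕ) (t : ℝ) (hn : 1 ≤ n) (ht : t ∈ Set.Icc (0:ℝ) 1) :
    ∑ r : Fin n, sc n t r = (n : ℝ) * t := by
  unfold sc
  rw [sc_aux n _ (floor_le_n n t hn ht)]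
  have hfl : (⌊(n : ℝ) * t⌋₊ : ℝ) ≤ (n:ℝ) * t :=
    Nat.floor_le (mul_nonneg (Nat.cast_nonneg n) ht.1)
  rcases frac_cases n t hn ht with h | ⟨h, h0⟩
  · rw [if_pos h]; ring
  · rw [if_neg (by omega), h]; rw [h] at h0; linarith

lemma sc_sq_sum (n : ℕ) (t : ℝ) (hn : 1 ≤ n) (ht : t ∈ Set.Icc (0:ℝ) 1) :
    ∑ r : Fin n, sc n t r * sc n t r = (n : ℝ) * t
      - ((n:ℝ) * t - (⌊(n : ℝ) * t⌋₊ : ℝ)) * (1 - ((n:ℝ) * t - (⌊(n : ℝ) * t⌋₊ : ℝ))) := by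
  set m := ⌊(n : ℝ) * t⌋₊ with hm
  set c := (n:ℝ) * t - (m : ℝ) with hc
  have hpt : ∀ r : Fin n, sc n t r * sc n t r
      = (if (r:ℕ) + 1 ≤ m then (1:ℝ) else 0) + c^2 * (if (r:ℕ) + 1 = m + 1 then 1 else 0) := by
    intro r
    unfold sc
    rw [← hm, ← hc]
    by_cases h1 : (r:ℕ) + 1 ≤ m <;> by_cases h2 : (r:ℕ) + 1 = m + 1 <;>
      simp only [Nat.add_right_cancel_iff] at h2 <;> simp [h1, h2] <;> first | ring | omega
  rw [Finset.sum_congr rfl (fun r _ => hpt r), sc_aux n m (floor_le_n n t hn ht)]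
  have hfl : (m : ℝ) ≤ (n:ℝ) * t :=
    Nat.floor_le (mul_nonneg (Nat.cast_nonneg n) ht.1)
  rcases frac_cases n t hn ht with h | ⟨h, h0⟩
  · rw [if_pos h]
    have : (m:ℝ) = (n:ℝ) * t - c := by rw [hc]; ring
    rw [this]; ring
  · rw [if_neg (by omega)]
    rw [← hc] at h0
    have : (m:ℝ) = (n:ℝ)*t := by rw [hc] at h0; linarith
    rw [this, h0]; ring

lemma perm_sum_shift {n : ℕ} (f : Fin n → ℝ) (i i' : Fin n) :
    ∑ R : Equiv.Perm (Fin n), f (R i) = ∑ R : Equiv.Perm (Fin n), f (R i') := by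
  refine Fintype.sum_bijective (· * Equiv.swap i i') (Group.mulRight_bijective _)
    (fun R => f (R i)) (fun R => f (R i')) ?_
  intro R
  simp [Equiv.Perm.mul_apply, Equiv.swap_apply_left]

lemma perm_sum_apply {n : ℕ} (f : Fin n → ℝ) (i : Fin n) :
    (n : ℝ) * ∑ R : Equiv.Perm (Fin n), f (R i)
      = (Nat.factorial n : ℝ) * ∑ r : Fin n, f r := by
  have h1 : (n : ℝ) * ∑ R : Equiv.Perm (Fin n), f (R i)
      = ∑ i' : Fin n, ∑ R : Equiv.Perm (Fin n), f (R i') := by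
    rw [Finset.sum_congr rfl (fun i' _ => perm_sum_shift f i' i), Finset.sum_const,
      Finset.card_univ, Fintype.card_fin, nsmul_eq_mul]
  rw [h1, Finset.sum_comm]
  rw [Finset.sum_congr rfl (fun R _ => Equiv.sum_comp R f)]
  rw [Finset.sum_const, Finset.card_univ, Fintype.card_perm, Fintype.card_fin, nsmul_eq_mul]

lemma perm_sum_pair_shift {n : ℕ} (a : Fin n → ℝ) {i j i' j' : Fin n}
    (hij : i ≠ j) (hij' : i' ≠ j') :
    ∑ R : Equiv.Perm (Fin n), a (R i) * a (R j)
      = ∑ R : Equiv.Perm (Fin n), a (R i') * a (R j') := by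
  set τ := Equiv.swap i i' with hτ
  have hτi : τ i = i' := Equiv.swap_apply_left i i'
  set ρ := Equiv.swap (τ j) j' with hρ
  have hji : τ j ≠ i' := by
    rw [← hτi]; exact fun h => hij (τ.injective h.symm)
  have hσi : (ρ * τ) i = i' := by
    simp only [Equiv.Perm.mul_apply, hτi]
    exact Equiv.swap_apply_of_ne_of_ne (Ne.symm hji) hij'
  have hσj : (ρ * τ) j = j' := Equiv.swap_apply_left _ _
  refine (Fintype.sum_bijective (· * (ρ * τ)) (Group.mulRight_bijective _)
    (fun R => a (R i') * a (R j')) (fun R => a (R i) * a (R j)) ?_).symm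
  intro R
  have : ∀ x : Fin n, (R * (ρ * τ)) x = R ((ρ * τ) x) := fun x => rfl
  simp only [this, hσi, hσj]

lemma perm_sum_pair {n : ℕ} (hn : 2 ≤ n) (a : Fin n → ℝ) {i0 j0 : Fin n} (hij : i0 ≠ j0) :
    (n : ℝ) * ((n : ℝ) - 1) * ∑ R : Equiv.Perm (Fin n), a (R i0) * a (R j0)
      = (Nat.factorial n : ℝ) * ((∑ r : Fin n, a r)^2 - ∑ r : Fin n, a r * a r) := by
  set T := ∑ R : Equiv.Perm (Fin n), a (R i0) * a (R j0) with hT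
  have hcard : ∀ f : ℝ, ∑ _R : Equiv.Perm (Fin n), f = (Nat.factorial n : ℝ) * f := by
    intro f
    rw [Finset.sum_const, Finset.card_univ, Fintype.card_perm, Fintype.card_fin, nsmul_eq_mul]
  have hfull : (Nat.factorial n : ℝ) * (∑ r : Fin n, a r)^2
      = ∑ i : Fin n, ∑ j : Fin n, ∑ R : Equiv.Perm (Fin n), a (R i) * a (R j) := by
    have h1 : ∀ R : Equiv.Perm (Fin n),
        (∑ r : Fin n, a r)^2 = ∑ i : Fin n, ∑ j : Fin n, a (R i) * a (R j) := by
      intro R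
      rw [← Equiv.sum_comp R a, sq, Finset.sum_mul_sum]
    rw [← hcard ((∑ r : Fin n, a r)^2), Finset.sum_congr rfl (fun R _ => h1 R),
      Finset.sum_comm]
    exact Finset.sum_congr rfl fun i _ => Finset.sum_comm
  have hdiag : ∑ i : Fin n, (∑ R : Equiv.Perm (Fin n), a (R i) * a (R i))
      = (Nat.factorial n : ℝ) * ∑ r : Fin n, a r * a r := by
    rw [Finset.sum_comm,
      Finset.sum_congr rfl (fun R _ => Equiv.sum_comp R (fun r => a r * a r)), hcard]
  have hoff : ∀ i : Fin n, ∀ j ∈ Finset.univ.erase i,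
      (∑ R : Equiv.Perm (Fin n), a (R i) * a (R j)) = T := by
    intro i j hj
    exact perm_sum_pair_shift a (Ne.symm (Finset.mem_erase.mp hj).1) hij
  have hsplit : ∀ i : Fin n, ∑ j : Fin n, (∑ R : Equiv.Perm (Fin n), a (R i) * a (R j))
      = (∑ R : Equiv.Perm (Fin n), a (R i) * a (R i)) + ((n : ℝ) - 1) * T := by
    intro i
    rw [← Finset.add_sum_erase _ _ (Finset.mem_univ i)]
    congr 1
    rw [Finset.sum_congr rfl (hoff i), Finset.sum_const, nsmul_eq_mul,
      Finset.card_erase_of_mem (Finset.mem_univ i), Finset.card_univ, Fintype.card_fin]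
    congr 1
    have : (1:ℕ) ≤ n := by omega
    push_cast [Nat.cast_sub this]
    ring
  rw [Finset.sum_congr rfl (fun i _ => hsplit i), Finset.sum_add_distrib, hdiag,
    Finset.sum_const, Finset.card_univ, Fintype.card_fin, nsmul_eq_mul] at hfull
  linarith [hfull]

lemma factor_lemma {ι : Type*} [Fintype ι] {n : ℕ} (F G : Equiv.Perm (Fin n) → ι → ℝ) :
    ∑ R : Equiv.Perm (Fin n), ∑ S : Equiv.Perm (Fin n), ∑ i : ι, F R i * G S i
      = ∑ i : ι, (∑ R : Equiv.Perm (Fin n), F R i) * (∑ S : Equiv.Perm (Fin n), G S i) := by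
  calc ∑ R : Equiv.Perm (Fin n), ∑ S : Equiv.Perm (Fin n), ∑ i : ι, F R i * G S i
      = ∑ R : Equiv.Perm (Fin n), ∑ i : ι, ∑ S : Equiv.Perm (Fin n), F R i * G S i :=
        Finset.sum_congr rfl fun R _ => Finset.sum_comm
    _ = ∑ i : ι, ∑ R : Equiv.Perm (Fin n), ∑ S : Equiv.Perm (Fin n), F R i * G S i :=
        Finset.sum_comm
    _ = ∑ i : ι, (∑ R : Equiv.Perm (Fin n), F R i) * (∑ S : Equiv.Perm (Fin n), G S i) := by
        refine Finset.sum_congr rfl fun i _ => ?_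
        rw [Finset.sum_mul]
        exact Finset.sum_congr rfl fun R _ => (Finset.mul_sum _ _ _).symm

set_option maxHeartbeats 2000000 in
/-- Under independence (averaging over independent uniformly random rank permutations),
`Var(C̄ₙ(u,v)) = (n-1)⁻¹ {u(1-u) − εₙ(u)}{v(1-v) − εₙ(v)}`. -/
theorem stmt_15 (n : ℕ) (hn : 2 ≤ n)
    (u v : ℝ) (hu : u ∈ Set.Icc (0:ℝ) 1) (hv : v ∈ Set.Icc (0:ℝ) 1) :
    (∑ R : Equiv.Perm (Fin n), ∑ S : Equiv.Perm (Fin n), (barRep n R S u v)^2)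
          / ((Nat.factorial n : ℝ))^2
        - ((∑ R : Equiv.Perm (Fin n), ∑ S : Equiv.Perm (Fin n), barRep n R S u v)
          / ((Nat.factorial n : ℝ))^2)^2
      = ((n : ℝ) - 1)⁻¹ * (u * (1 - u) - epsn n u) * (v * (1 - v) - epsn n v) := by
  have hn1 : 1 ≤ n := by omega
  have hN0 : (n:ℝ) ≠ 0 := by positivity
  have hN2 : (2:ℝ) ≤ (n:ℝ) := by exact_mod_cast hn
  have hN1 : (n:ℝ) - 1 ≠ 0 := by linarith
  have hF0 : (Nat.factorial n : ℝ) ≠ 0 :=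
    Nat.cast_ne_zero.mpr (Nat.factorial_ne_zero n)
  set a := sc n u with ha
  set b := sc n v with hb
  set A1 := ∑ r : Fin n, a r with hA1def
  set A2 := ∑ r : Fin n, a r * a r with hA2def
  set B1 := ∑ r : Fin n, b r with hB1def
  set B2 := ∑ r : Fin n, b r * b r with hB2def
  set cu := (n:ℝ) * u - (⌊(n : ℝ) * u⌋₊ : ℝ) with hcu
  set cv := (n:ℝ) * v - (⌊(n : ℝ) * v⌋₊ : ℝ) with hcv
  have hA1 : A1 = (n:ℝ) * u := sc_sum n u hn1 hu
  have hB1 : B1 = (n:ℝ) * v := sc_sum n v hn1 hv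
  have hA2 : A2 = (n:ℝ) * u - cu * (1 - cu) := sc_sq_sum n u hn1 hu
  have hB2 : B2 = (n:ℝ) * v - cv * (1 - cv) := sc_sq_sum n v hn1 hv
  -- means
  have hmeanA : ∀ i : Fin n, (∑ R : Equiv.Perm (Fin n), a (R i))
      = (Nat.factorial n : ℝ) * A1 / n := by
    intro i
    have h := perm_sum_apply a i
    field_simp
    linarith
  have hmeanB : ∀ i : Fin n, (∑ S : Equiv.Perm (Fin n), b (S i))
      = (Nat.factorial n : ℝ) * B1 / n := by
    intro i
    have h := perm_sum_apply b i
    field_simp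
    linarith
  have hdiagA : ∀ i : Fin n, (∑ R : Equiv.Perm (Fin n), a (R i) * a (R i))
      = (Nat.factorial n : ℝ) * A2 / n := by
    intro i
    have h := perm_sum_apply (fun r => a r * a r) i
    field_simp
    rw [hA2def]; simp only [sq]
    linarith
  have hdiagB : ∀ i : Fin n, (∑ S : Equiv.Perm (Fin n), b (S i) * b (S i))
      = (Nat.factorial n : ℝ) * B2 / n := by
    intro i
    have h := perm_sum_apply (fun r => b r * b r) i
    field_simp
    rw [hB2def]; simp only [sq]
    linarith
  have hoffA : ∀ i j : Fin n, i ≠ j → (∑ R : Equiv.Perm (Fin n), a (R i) * a (R j))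
      = (Nat.factorial n : ℝ) * (A1^2 - A2) / ((n:ℝ) * ((n:ℝ) - 1)) := by
    intro i j hij
    have h := perm_sum_pair hn a hij
    field_simp
    linarith
  have hoffB : ∀ i j : Fin n, i ≠ j → (∑ S : Equiv.Perm (Fin n), b (S i) * b (S j))
      = (Nat.factorial n : ℝ) * (B1^2 - B2) / ((n:ℝ) * ((n:ℝ) - 1)) := by
    intro i j hij
    have h := perm_sum_pair hn b hij
    field_simp
    linarith
  -- first moment
  have hbar : ∀ R S : Equiv.Perm (Fin n),
      barRep n R S u v = (1 / n : ℝ) * ∑ i : Fin n, a (R i) * b (S i) := fun R S => rfl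
  have hM : ∑ R : Equiv.Perm (Fin n), ∑ S : Equiv.Perm (Fin n), barRep n R S u v
      = (1 / n : ℝ) * ((n:ℝ) * ((Nat.factorial n : ℝ) * A1 / n
          * ((Nat.factorial n : ℝ) * B1 / n))) := by
    simp only [hbar, ← Finset.mul_sum]
    congr 1
    rw [factor_lemma (fun R i => a (R i)) (fun S i => b (S i))]
    rw [Finset.sum_congr rfl (fun i _ => by rw [hmeanA i, hmeanB i]),
      Finset.sum_const, Finset.card_univ, Fintype.card_fin, nsmul_eq_mul]
  -- second moment
  have hbar2 : ∀ R S : Equiv.Perm (Fin n),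
      (barRep n R S u v)^2 = (1 / n : ℝ)^2 * ∑ p : Fin n × Fin n,
        (a (R p.1) * a (R p.2)) * (b (S p.1) * b (S p.2)) := by
    intro R S
    rw [hbar R S, mul_pow, sq (∑ i : Fin n, a (R i) * b (S i)), Finset.sum_mul_sum,
      Fintype.sum_prod_type]
    congr 1
    refine Finset.sum_congr rfl fun i _ => Finset.sum_congr rfl fun j _ => ?_
    ring
  have hQ : ∑ R : Equiv.Perm (Fin n), ∑ S : Equiv.Perm (Fin n), (barRep n R S u v)^2
      = (1 / n : ℝ)^2 * ((n:ℝ) * ((Nat.factorial n : ℝ) * A2 / n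
            * ((Nat.factorial n : ℝ) * B2 / n))
          + (n:ℝ) * (((n:ℝ) - 1) * ((Nat.factorial n : ℝ) * (A1^2 - A2) / ((n:ℝ) * ((n:ℝ) - 1))
            * ((Nat.factorial n : ℝ) * (B1^2 - B2) / ((n:ℝ) * ((n:ℝ) - 1)))))) := by
    simp only [hbar2, ← Finset.mul_sum]
    congr 1
    rw [factor_lemma (fun R (p : Fin n × Fin n) => a (R p.1) * a (R p.2))
      (fun S (p : Fin n × Fin n) => b (S p.1) * b (S p.2))]
    rw [Fintype.sum_prod_type]
    have hrow : ∀ i : Fin n,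
        ∑ j : Fin n, (∑ R : Equiv.Perm (Fin n), a (R i) * a (R j))
            * (∑ S : Equiv.Perm (Fin n), b (S i) * b (S j))
        = (Nat.factorial n : ℝ) * A2 / n * ((Nat.factorial n : ℝ) * B2 / n)
          + ((n:ℝ) - 1) * ((Nat.factorial n : ℝ) * (A1^2 - A2) / ((n:ℝ) * ((n:ℝ) - 1))
            * ((Nat.factorial n : ℝ) * (B1^2 - B2) / ((n:ℝ) * ((n:ℝ) - 1)))) := by
      intro i
      rw [← Finset.add_sum_erase _ _ (Finset.mem_univ i), hdiagA i, hdiagB i]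
      congr 1
      rw [Finset.sum_congr rfl (fun j hj => by
          rw [hoffA i j (Ne.symm (Finset.mem_erase.mp hj).1),
            hoffB i j (Ne.symm (Finset.mem_erase.mp hj).1)]),
        Finset.sum_const, nsmul_eq_mul,
        Finset.card_erase_of_mem (Finset.mem_univ i), Finset.card_univ, Fintype.card_fin]
      congr 1
      have h1 : (1:ℕ) ≤ n := by omega
      push_cast [Nat.cast_sub h1]
      ring
    rw [Finset.sum_congr rfl (fun i _ => hrow i), Finset.sum_const,
      Finset.card_univ, Fintype.card_fin, nsmul_eq_mul]
    ring
  rw [hM, hQ, hA1, hB1, hA2, hB2]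
  unfold epsn
  rw [← hcu, ← hcv]
  field_simp
  ring
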